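/- One-fold Darboux transformation of the extended multi-component Toda hierarchy. Let ε > 0, λ ∈ ℂ, and let u, v, φ : ℝ → M_N(ℂ) be such that φ(x) is invertible for every x and φ satisfies the spectral problem φ(x+ε) + u(x)φ(x) + v(x)φ(x−ε) = λ φ(x) for all x. Define a(x) = φ(x)φ(x−ε)⁻¹, u^{[1]}(x) = u(x) + a(x+ε) − a(x), and v^{[1]}(x) = a(x) v(x−ε) a(x−ε)⁻¹. Then the intertwining relation L^{[1]} W = W L holds, where W = I_N − a(x)Λ^{−1}, L = Λ + u + vΛ^{−1} and L^{[1]} = Λ + u^{[1]} + v^{[1]}Λ^{−1}; explicitly, for every function g : ℝ → M_N(ℂ) and every x: [g(x+ε) − a(x+ε)g(x)] + u^{[1]}(x)[g(x) − a(x)g(x−ε)] + v^{[1]}(x)[g(x−ε) − a(x−ε)g(x−2ε)] = [g(x+ε) + u(x)g(x) + v(x)g(x−ε)] − a(x)[g(x) + u(x−ε)g(x−ε) + v(x−ε)g(x−2ε)]. -/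

import Mathlib

/-!
STATEMENT 6: one-fold Darboux transformation of the extended multi-component
Toda hierarchy.  With `a(x) = φ(x)φ(x−ε)⁻¹`, `u¹ = u + a(x+ε) − a`,
`v¹(x) = a(x) v(x−ε) a(x−ε)⁻¹`, the intertwining relation `L¹ W = W L` holds,
stated explicitly as an identity of the two operators applied to an arbitrary
function `g : ℝ → Mat N` at every point `x`.
-/

open Matrix

theorem onefold_darboux_intertwining
    (N : ℕ) (ε : ℝ) (hε : 0 < ε) (lam : ℂ)
    (u v φ : ℝ → Matrix (Fin N) (Fin N) ℂ)
    (hφ : ∀ x : ℝ, IsUnit (φ x))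
    (hspec : ∀ x : ℝ, φ (x + ε) + u x * φ x + v x * φ (x - ε) = lam • φ x) :
    ∀ (g : ℝ → Matrix (Fin N) (Fin N) ℂ) (x : ℝ),
      let a : ℝ → Matrix (Fin N) (Fin N) ℂ := fun y => φ y * (φ (y - ε))⁻¹
      let u1 : ℝ → Matrix (Fin N) (Fin N) ℂ := fun y => u y + a (y + ε) - a y
      let v1 : ℝ → Matrix (Fin N) (Fin N) ℂ := fun y => a y * v (y - ε) * (a (y - ε))⁻¹
      (g (x + ε) - a (x + ε) * g x)
          + u1 x * (g x - a x * g (x - ε))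
          + v1 x * (g (x - ε) - a (x - ε) * g (x - 2 * ε))
        = (g (x + ε) + u x * g x + v x * g (x - ε))
          - a x * (g x + u (x - ε) * g (x - ε) + v (x - ε) * g (x - 2 * ε)) := by
  intro g x a u1 v1
  have hdet : ∀ y : ℝ, IsUnit (φ y).det := fun y => (Matrix.isUnit_iff_isUnit_det _).mp (hφ y)
  have h2e : x - ε - ε = x - 2 * ε := by ring
  have hpe : x + ε - ε = x := by ring
  have hadet : ∀ y : ℝ, IsUnit (a y).det := by
    intro y
    simp only [a, Matrix.det_mul, Matrix.det_nonsing_inv]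
    exact (hdet y).mul (isUnit_ringInverse.mpr (hdet _))
  have ha_inv : (a (x - ε))⁻¹ = φ (x - 2 * ε) * (φ (x - ε))⁻¹ := by
    simp only [a, h2e, Matrix.mul_inv_rev, Matrix.nonsing_inv_nonsing_inv _ (hdet _)]
  -- claim 3
  have c3 : v1 x * a (x - ε) = a x * v (x - ε) := by
    simp only [v1]
    exact Matrix.nonsing_inv_mul_cancel_right _ _ (hadet _)
  -- h1 : u x * a x = lam • a x - φ (x+ε) * (φ (x-ε))⁻¹ - v x
  have h1 : u x * a x = lam • a x - φ (x + ε) * (φ (x - ε))⁻¹ - v x := by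
    have := congrArg (· * (φ (x - ε))⁻¹) (hspec x)
    simp only [add_mul, smul_mul_assoc, mul_assoc,
      Matrix.mul_nonsing_inv_cancel_right _ _ (hdet _)] at this
    simp only [a, mul_assoc]
    linear_combination (norm := noncomm_ring) this
  -- from hspec (x - ε)
  have h0 : a x + u (x - ε) + v (x - ε) * (a (x - ε))⁻¹ = lam • (1 : Matrix (Fin N) (Fin N) ℂ) := by
    have hme : x - ε + ε = x := by ring
    have := congrArg (· * (φ (x - ε))⁻¹) (hspec (x - ε))
    simp only [hme] at this
    simp only [add_mul, smul_mul_assoc, mul_assoc, h2e,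
      Matrix.mul_nonsing_inv_cancel_right _ _ (hdet _),
      Matrix.mul_nonsing_inv _ (hdet _)] at this
    rw [ha_inv]
    simp only [a]
    linear_combination (norm := noncomm_ring) this
  -- claim 2
  have hax : a (x + ε) * a x = φ (x + ε) * (φ (x - ε))⁻¹ := by
    simp only [a, hpe, mul_assoc, Matrix.nonsing_inv_mul_cancel_left _ _ (hdet _)]
  have hv1 : v1 x = lam • a x - a x * a x - a x * u (x - ε) := by
    have : v (x - ε) * (a (x - ε))⁻¹ = lam • (1 : Matrix (Fin N) (Fin N) ℂ) - a x - u (x - ε) := by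
      linear_combination (norm := noncomm_ring) h0
    simp only [v1, mul_assoc, this]
    noncomm_ring
  have c2 : v1 x - u1 x * a x = v x - a x * u (x - ε) := by
    simp only [u1, hv1]
    rw [sub_mul, add_mul, h1, hax]
    abel
  -- assemble
  have c1 : u1 x - a (x + ε) = u x - a x := by simp only [u1]; abel
  have expand : (g (x + ε) - a (x + ε) * g x)
          + u1 x * (g x - a x * g (x - ε))
          + v1 x * (g (x - ε) - a (x - ε) * g (x - 2 * ε))
      = g (x + ε) + (u1 x - a (x + ε)) * g x + (v1 x - u1 x * a x) * g (x - ε)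
          - v1 x * a (x - ε) * g (x - 2 * ε) := by noncomm_ring
  rw [expand, c1, c2, c3]
  noncomm_ring
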